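/- arXiv:2502.17175 — 3 statements merged into one kernel-verified Lean document; each statement's English description precedes it below -/
import Mathlib

section
/- Let A ∈ R^{d×d} be positive definite and define x*(v) = A v / ‖v‖_A for nonzero v ∈ R^d. For any nonzero θ, u ∈ R^d, if θ^T A u ≥ 0 then θ^T ( x*(θ) − x*(u) ) ≤ ‖θ − u‖_A² / ‖θ‖_A. -/
open Matrix

/-- For positive definite `A` and nonzero `θ, u` with `θᵀAu ≥ 0`, with
`x*(v) = Av/‖v‖_A`, one has `θᵀ(x*(θ) − x*(u)) ≤ ‖θ − u‖_A² / ‖θ‖_A`,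
where `‖v‖_M = sqrt(vᵀ M v)`. -/
theorem commit_error_quadratic {d : ℕ} (A : Matrix (Fin d) (Fin d) ℝ) (hA : A.PosDef)
    (θ u : Fin d → ℝ) (hθ : θ ≠ 0) (hu : u ≠ 0) (h : 0 ≤ θ ⬝ᵥ A *ᵥ u) :
    θ ⬝ᵥ ((Real.sqrt (θ ⬝ᵥ A *ᵥ θ))⁻¹ • (A *ᵥ θ) - (Real.sqrt (u ⬝ᵥ A *ᵥ u))⁻¹ • (A *ᵥ u))
      ≤ ((θ - u) ⬝ᵥ A *ᵥ (θ - u)) / Real.sqrt (θ ⬝ᵥ A *ᵥ θ) := by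
  set a := θ ⬝ᵥ A *ᵥ θ with ha
  set b := u ⬝ᵥ A *ᵥ u with hb
  set c := θ ⬝ᵥ A *ᵥ u with hc
  have hsymm : ∀ x y : Fin d → ℝ, x ⬝ᵥ A *ᵥ y = y ⬝ᵥ A *ᵥ x := by
    intro x y
    rw [dotProduct_mulVec, ← mulVec_transpose, show Aᵀ = A from hA.1, dotProduct_comm]
  have hcu : u ⬝ᵥ A *ᵥ θ = c := hsymm u θ
  have hapos : 0 < a := by simpa using hA.dotProduct_mulVec_pos hθ
  have hbpos : 0 < b := by simpa using hA.dotProduct_mulVec_pos hu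
  -- Cauchy–Schwarz : c^2 ≤ a * b
  have hCS : c ^ 2 ≤ a * b := by
    have h0 := hA.posSemidef.dotProduct_mulVec_nonneg (b • θ - c • u)
    simp only [star_trivial, sub_mulVec, mulVec_sub, mulVec_smul, dotProduct_sub,
      sub_dotProduct, dotProduct_smul, smul_dotProduct, smul_eq_mul, ← ha, ← hb, ← hc, hcu] at h0
    nlinarith [h0]
  have hquad : (θ - u) ⬝ᵥ A *ᵥ (θ - u) = a - 2 * c + b := by
    simp only [sub_mulVec, mulVec_sub, dotProduct_sub, sub_dotProduct, ← ha, ← hb, ← hc, hcu]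
    ring
  set s := Real.sqrt a with hs
  set t := Real.sqrt b with ht
  have hspos : 0 < s := Real.sqrt_pos.mpr hapos
  have htpos : 0 < t := Real.sqrt_pos.mpr hbpos
  have hs2 : s ^ 2 = a := Real.sq_sqrt hapos.le
  have ht2 : t ^ 2 = b := Real.sq_sqrt hbpos.le
  have hcst : c ≤ s * t := by
    nlinarith [hCS, hs2, ht2, mul_pos hspos htpos, h]
  have hlhs : θ ⬝ᵥ (s⁻¹ • (A *ᵥ θ) - t⁻¹ • (A *ᵥ u)) = s⁻¹ * a - t⁻¹ * c := by
    simp [dotProduct_sub, dotProduct_smul, smul_eq_mul, ← ha, ← hc]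
  rw [hlhs, hquad]
  have e0 : s⁻¹ * a - t⁻¹ * c = (s * t - c) / t := by
    rw [← hs2]; field_simp
  rw [e0, div_le_div_iff₀ htpos hspos]
  -- (s*t - c)*s ≤ (a - 2c + b)*t  ⟺  c*(2t - s) ≤ t^3
  rcases le_or_gt (2 * t - s) 0 with hcase | hcase
  · nlinarith [mul_nonneg h (neg_nonneg.mpr hcase), mul_pos htpos (mul_pos htpos htpos)]
  · nlinarith [mul_le_mul_of_nonneg_right hcst hcase.le,
      mul_nonneg htpos.le (sq_nonneg (t - s))]
end

section
/- For any nonzero vectors θ, u ∈ R^d with θ^T u ≥ 0 (Euclidean inner product), one has ‖ θ − (‖θ‖/‖u‖)·u ‖² ≤ 2 ‖θ − u‖², where ‖·‖ is the Euclidean norm. -/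
open scoped RealInnerProductSpace

/-- For nonzero `θ, u ∈ ℝ^d` with `θᵀu ≥ 0`:
`‖θ − (‖θ‖/‖u‖)u‖² ≤ 2‖θ − u‖²`. -/
theorem norm_sub_rescaled_le {d : ℕ} (θ u : EuclideanSpace ℝ (Fin d))
    (hθ : θ ≠ 0) (hu : u ≠ 0) (h : 0 ≤ ⟪θ, u⟫) :
    ‖θ - (‖θ‖ / ‖u‖) • u‖ ^ 2 ≤ 2 * ‖θ - u‖ ^ 2 := by
  have hb : 0 < ‖u‖ := norm_pos_iff.mpr hu
  have ha : 0 < ‖θ‖ := norm_pos_iff.mpr hθ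
  have hcs : ⟪θ, u⟫ ≤ ‖θ‖ * ‖u‖ := real_inner_le_norm θ u
  rw [norm_sub_sq_real, norm_sub_sq_real, real_inner_smul_right, norm_smul,
    Real.norm_eq_abs, abs_of_nonneg (by positivity : (0:ℝ) ≤ ‖θ‖ / ‖u‖)]
  have hbb : ‖θ‖ / ‖u‖ * ‖u‖ = ‖θ‖ := div_mul_cancel₀ _ hb.ne'
  rw [hbb]
  have h2 : ‖θ‖ * ⟪θ, u⟫ / ‖u‖ * ‖u‖ = ‖θ‖ * ⟪θ, u⟫ := div_mul_cancel₀ _ hb.ne'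
  rcases le_or_gt ‖θ‖ (2 * ‖u‖) with hc | hc
  · nlinarith [h2, mul_nonneg (mul_nonneg hb.le hb.le) hb.le,
      mul_nonneg (sub_nonneg.mpr hc) (sub_nonneg.mpr hcs),
      mul_nonneg hb.le (sq_nonneg (‖θ‖ - ‖u‖))]
  · nlinarith [h2, mul_nonneg h (sub_nonneg.mpr hc.le), div_nonneg (mul_nonneg ha.le h) hb.le,
      mul_nonneg hb.le hb.le]
end

section
/- Let d ≥ 2 be a natural number and let c ≥ 2·sqrt(2) be a real number. Then ∑_{i=1}^{∞} sqrt(i·d·c²) · exp(−i·d·c²/4) ≤ exp(−d c²/8) / (1 − exp(−d c²/8)), and in particular the series on the left converges. -/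
lemma aux_le_exp {t : ℝ} (ht : 16 ≤ t) : Real.sqrt t ≤ Real.exp (t / 8) := by
  have h1 : (1 : ℝ) + t / 16 ≤ Real.exp (t / 16) := by linarith [Real.add_one_le_exp (t / 16)]
  have h1' : (1 + t / 16) ^ 4 ≤ Real.exp (t / 16) ^ 4 := by
    apply pow_le_pow_left₀ (by nlinarith) h1
  have h2 : Real.exp (t / 16) ^ 4 = Real.exp (t / 4) := by
    rw [← Real.exp_nat_mul]; ring_nf
  have h3 : t ≤ (1 + t / 16) ^ 4 := by nlinarith [sq_nonneg (t / 16 - 1), sq_nonneg (t / 16 + 1), sq_nonneg t, sq_nonneg (t - 16)]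
  have h4 : t ≤ Real.exp (t / 4) := by
    calc t ≤ (1 + t / 16) ^ 4 := h3
    _ ≤ Real.exp (t / 16) ^ 4 := h1'
    _ = Real.exp (t / 4) := h2
  have h5 : Real.exp (t / 4) = Real.exp (t / 8) ^ 2 := by
    rw [← Real.exp_nat_mul]; ring_nf
  calc Real.sqrt t ≤ Real.sqrt (Real.exp (t / 8) ^ 2) := by
        apply Real.sqrt_le_sqrt; rw [← h5]; exact h4
    _ = Real.exp (t / 8) := Real.sqrt_sq (Real.exp_pos _).le

/-- For `d ≥ 2` and `c ≥ 2√2`, the series `∑_{i=1}^∞ sqrt(i d c²) exp(−i d c²/4)` converges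
and its sum is at most `exp(−d c²/8) / (1 − exp(−d c²/8))`. -/
theorem tsum_sqrt_mul_exp_le (d : ℕ) (hd : 2 ≤ d) (c : ℝ) (hc : 2 * Real.sqrt 2 ≤ c) :
    Summable (fun i : ℕ =>
      Real.sqrt (((i : ℝ) + 1) * d * c ^ 2) * Real.exp (-(((i : ℝ) + 1) * d * c ^ 2) / 4)) ∧
    ∑' i : ℕ, Real.sqrt (((i : ℝ) + 1) * d * c ^ 2) * Real.exp (-(((i : ℝ) + 1) * d * c ^ 2) / 4)
      ≤ Real.exp (-((d : ℝ) * c ^ 2) / 8) / (1 - Real.exp (-((d : ℝ) * c ^ 2) / 8)) := by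
  have hs2 : Real.sqrt 2 ^ 2 = 2 := Real.sq_sqrt (by norm_num)
  have hc8 : (8 : ℝ) ≤ c ^ 2 := by
    have h0 : (0:ℝ) ≤ 2 * Real.sqrt 2 := by positivity
    nlinarith [Real.sqrt_nonneg 2]
  have hd2 : (2 : ℝ) ≤ (d : ℝ) := by exact_mod_cast hd
  set x : ℝ := (d : ℝ) * c ^ 2 with hx
  have hx16 : 16 ≤ x := by nlinarith
  set r : ℝ := Real.exp (-x / 8) with hr
  have hr0 : 0 < r := Real.exp_pos _
  have hr1 : r < 1 := by
    rw [hr, Real.exp_lt_one_iff]; linarith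
  -- termwise bound
  have key : ∀ i : ℕ,
      Real.sqrt (((i : ℝ) + 1) * d * c ^ 2) * Real.exp (-(((i : ℝ) + 1) * d * c ^ 2) / 4)
        ≤ r ^ (i + 1) := by
    intro i
    have hi1 : (1 : ℝ) ≤ (i : ℝ) + 1 := by have := Nat.cast_nonneg (α := ℝ) i; linarith
    have ht : 16 ≤ ((i : ℝ) + 1) * d * c ^ 2 := by nlinarith
    set t : ℝ := ((i : ℝ) + 1) * d * c ^ 2 with htdef
    have hb : Real.sqrt t ≤ Real.exp (t / 8) := aux_le_exp ht
    have : Real.sqrt t * Real.exp (-t / 4) ≤ Real.exp (t / 8) * Real.exp (-t / 4) :=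
      mul_le_mul_of_nonneg_right hb (Real.exp_pos _).le
    calc Real.sqrt t * Real.exp (-t / 4) ≤ Real.exp (t / 8) * Real.exp (-t / 4) := this
      _ = Real.exp (-t / 8) := by rw [← Real.exp_add]; ring_nf
      _ = r ^ (i + 1) := by
          rw [hr, ← Real.exp_nat_mul]
          congr 1
          push_cast
          rw [htdef, hx]
          ring
  have hgeo : Summable (fun i : ℕ => r ^ (i + 1)) := by
    apply Summable.comp_injective (summable_geometric_of_lt_one hr0.le hr1)
    exact fun a b h => by omega
  have hnonneg : ∀ i : ℕ, 0 ≤ Real.sqrt (((i : ℝ) + 1) * d * c ^ 2) *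
      Real.exp (-(((i : ℝ) + 1) * d * c ^ 2) / 4) := fun i => by positivity
  have hsum : Summable (fun i : ℕ =>
      Real.sqrt (((i : ℝ) + 1) * d * c ^ 2) * Real.exp (-(((i : ℝ) + 1) * d * c ^ 2) / 4)) :=
    Summable.of_nonneg_of_le hnonneg key hgeo
  refine ⟨hsum, ?_⟩
  have htsum_geo : ∑' i : ℕ, r ^ (i + 1) = r / (1 - r) := by
    have : ∀ i : ℕ, r ^ (i + 1) = r * r ^ i := fun i => by ring
    simp_rw [this]
    rw [tsum_mul_left, tsum_geometric_of_lt_one hr0.le hr1]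
    field_simp
  calc ∑' i : ℕ, Real.sqrt (((i : ℝ) + 1) * d * c ^ 2) *
        Real.exp (-(((i : ℝ) + 1) * d * c ^ 2) / 4)
      ≤ ∑' i : ℕ, r ^ (i + 1) := Summable.tsum_le_tsum key hsum hgeo
    _ = r / (1 - r) := htsum_geo
end
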